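/- Let A be a reduced Noetherian commutative ring and let C• be a bounded cochain complex of finite free A-modules. Let (h^i)_{i ∈ ℤ} be natural numbers. Suppose that for every prime ideal 𝔭 of A and every i, the κ(𝔭)-vector space H^i(C• ⊗_A κ(𝔭)) has dimension h^i, where κ(𝔭) is the residue field of A at 𝔭. Then for every i the cohomology module H^i(C•) is a finitely generated projective A-module, and for every prime ideal 𝔭 the localization H^i(C•)_𝔭 is a free A_𝔭-module of rank h^i. -/

import Mathlib

open TensorProduct

set_option maxHeartbeats 1000000


/-- The cohomology `ker g / im f` of a pair of composable linear maps. -/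
abbrev cohQuot {S : Type*} [CommRing S]
    {M₀ M₁ M₂ : Type*} [AddCommGroup M₀] [AddCommGroup M₁] [AddCommGroup M₂]
    [Module S M₀] [Module S M₁] [Module S M₂]
    (f : M₀ →ₗ[S] M₁) (g : M₁ →ₗ[S] M₂) : Type _ :=
  ↥(LinearMap.ker g) ⧸ Submodule.comap (LinearMap.ker g).subtype (LinearMap.range f)

/-- The residue field `κ(𝔭)` of a commutative ring at a prime ideal `𝔭`. -/
abbrev residueFieldAt {A : Type*} [CommRing A] (𝔭 : Ideal A) [𝔭.IsPrime] : Type _ :=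
  IsLocalRing.ResidueField (Localization.AtPrime 𝔭)



/-- coercion of baseChange equals coercion of lTensor -/
theorem baseChange_coe {R S : Type*} [CommRing R] [CommRing S] [Algebra R S]
    {X Y : Type*} [AddCommGroup X] [AddCommGroup Y] [Module R X] [Module R Y]
    (g : X →ₗ[R] Y) : ⇑(g.baseChange S) = ⇑(g.lTensor S) := by
  funext z
  induction z using TensorProduct.induction_on with
  | zero => simp
  | tmul a p => simp
  | add x y hx hy => simp only [map_add, hx, hy]

noncomputable def tensorProdEquiv (R B : Type*) [CommRing R] [CommRing B] [Algebra R B]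
    (X Y : Type*) [AddCommGroup X] [AddCommGroup Y] [Module R X] [Module R Y] :
    B ⊗[R] (X × Y) ≃ₗ[B] (B ⊗[R] X) × (B ⊗[R] Y) := by
  refine LinearEquiv.ofBijective
    (LinearMap.prod ((LinearMap.fst R X Y).baseChange B) ((LinearMap.snd R X Y).baseChange B)) ?_
  have h : ⇑(LinearMap.prod ((LinearMap.fst R X Y).baseChange B)
      ((LinearMap.snd R X Y).baseChange B)) = ⇑(TensorProduct.prodRight R B B X Y) := by
    funext z
    induction z using TensorProduct.induction_on with
    | zero => simp
    | tmul a p => obtain ⟨x, y⟩ := p; simp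
    | add x y hx hy =>
        simp only [map_add, hx, hy]
  rw [h]
  exact (TensorProduct.prodRight R B B X Y).bijective

/-- split surjection onto projective gives product decomposition -/
theorem splitHelper {R M N : Type*} [CommRing R] [AddCommGroup M] [AddCommGroup N]
    [Module R M] [Module R N] (g : M →ₗ[R] N) (hg : Function.Surjective g)
    (hproj : Module.Projective R N) :
    Nonempty (M ≃ₗ[R] ↥(LinearMap.ker g) × N) := by
  obtain ⟨σ, hσ⟩ := Module.projective_lifting_property g LinearMap.id hg
  have hσ' : ∀ y, g (σ y) = y := fun y => congrArg (fun f => f y) (congrArg DFunLike.coe hσ)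
  refine ⟨LinearEquiv.ofLinear
    (LinearMap.prod ((LinearMap.id - σ.comp g).codRestrict (LinearMap.ker g)
      (fun x => by simp [hσ' (g x)])) g)
    ((LinearMap.ker g).subtype.coprod σ) ?_ ?_⟩
  · apply LinearMap.ext
    rintro ⟨⟨k, hk⟩, y⟩
    have hgk : g k = 0 := hk
    apply Prod.ext
    · apply Subtype.ext
      simp [hσ', hgk]
    · simp [hσ', hgk]
  · apply LinearMap.ext
    intro x
    simp



universe u v w

theorem injective_of_fiber_dim {R : Type u} [CommRing R] [IsReduced R]
    {N : Type v} [AddCommGroup N] [Module R N] {c : ℕ}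
    (φ : (Fin c → R) →ₗ[R] N) (hφ : Function.Surjective φ)
    (H : ∀ (𝔭 : Ideal R), 𝔭.IsPrime → ∃ (K : Type w) (_ : Field K) (_ : Algebra R K),
      RingHom.ker (algebraMap R K) ≤ 𝔭 ∧ Module.finrank K (K ⊗[R] N) = c) :
    Function.Injective φ := by
  rw [← LinearMap.ker_eq_bot]
  refine (Submodule.eq_bot_iff _).mpr fun y hy => ?_
  have hy' : φ y = 0 := hy
  funext j
  have hnil : y j ∈ nilradical R := by
    rw [nilradical_eq_sInf]
    refine Ideal.mem_sInf.mpr fun {𝔭} h𝔭 => ?_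
    obtain ⟨K, _, _, hker, hdim⟩ := H 𝔭 h𝔭
    haveI : Nontrivial R := by
      rcases subsingleton_or_nontrivial R with hR | hR
      · exact absurd (Subsingleton.elim 𝔭 ⊤) h𝔭.ne_top
      · exact hR
    -- base changed map
    set ψ := φ.baseChange K with hψ
    have hsurj : Function.Surjective ψ := by
      rw [hψ, baseChange_coe]
      exact LinearMap.lTensor_surjective K hφ
    haveI : Module.Finite K (K ⊗[R] (Fin c → R)) := inferInstance
    haveI : Module.Finite K (K ⊗[R] N) := Module.Finite.of_surjective ψ hsurj
    have heq : Module.finrank K (K ⊗[R] (Fin c → R)) = Module.finrank K (K ⊗[R] N) := by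
      rw [hdim, Module.finrank_baseChange, Module.finrank_pi]
      simp
    have hinj : Function.Injective ψ :=
      (LinearMap.injective_iff_surjective_of_finrank_eq_finrank heq).mpr hsurj
    have h0 : ψ ((1 : K) ⊗ₜ y) = 0 := by
      rw [hψ]
      simp [LinearMap.baseChange_tmul, hy']
    have h1 : ((1 : K) ⊗ₜ y : K ⊗[R] (Fin c → R)) = 0 := by
      apply hinj
      rw [h0, map_zero]
    have h2 : ((1 : K) ⊗ₜ (y j) : K ⊗[R] R) = 0 := by
      have := congrArg ((LinearMap.proj j : (Fin c → R) →ₗ[R] R).baseChange K) h1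
      simpa using this
    have h3 : algebraMap R K (y j) = 0 := by
      have := congrArg (TensorProduct.AlgebraTensorModule.rid R K K) h2
      simpa [Algebra.smul_def] using this
    exact hker h3
  simpa using (by rwa [nilradical_eq_zero, Ideal.zero_eq_bot, Ideal.mem_bot] at hnil : y j = 0)

theorem exists_equiv_of_local {R : Type u} [CommRing R] [IsLocalRing R] [IsReduced R]
    {N : Type v} [AddCommGroup N] [Module R N] [Module.Finite R N] {c : ℕ}
    (H : ∀ (𝔭 : Ideal R), 𝔭.IsPrime → ∃ (K : Type w) (_ : Field K) (_ : Algebra R K),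
      RingHom.ker (algebraMap R K) = 𝔭 ∧ Module.finrank K (K ⊗[R] N) = c) :
    Nonempty ((Fin c → R) ≃ₗ[R] N) := by
  classical
  haveI : Nontrivial R := by
    rcases subsingleton_or_nontrivial R with hR | hR
    · exact absurd (Subsingleton.elim (IsLocalRing.maximalIdeal R) ⊤)
        (IsLocalRing.maximalIdeal.isMaximal R).ne_top
    · exact hR
  set k := IsLocalRing.ResidueField R with hk
  -- residue field fiber has dimension c
  obtain ⟨K, _, _, hker, hdim⟩ := H (IsLocalRing.maximalIdeal R)
    (IsLocalRing.maximalIdeal.isMaximal R).isPrime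
  letI : Algebra k K := (Ideal.Quotient.lift (IsLocalRing.maximalIdeal R) (algebraMap R K)
    (fun a ha => by rw [← RingHom.mem_ker, hker]; exact ha)).toAlgebra
  haveI : IsScalarTower R k K := IsScalarTower.of_algebraMap_eq (fun x => by
    exact (Ideal.Quotient.lift_mk _ _ _).symm)
  have hdimk : Module.finrank k (k ⊗[R] N) = c := by
    have e : K ⊗[k] (k ⊗[R] N) ≃ₗ[K] K ⊗[R] N :=
      TensorProduct.AlgebraTensorModule.cancelBaseChange R k K K N
    have h1 : Module.finrank K (K ⊗[k] (k ⊗[R] N)) = Module.finrank k (k ⊗[R] N) :=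
      Module.finrank_baseChange
    rw [← h1, e.finrank_eq, hdim]
  -- choose a basis of pure tensors
  have hsurj1 : Function.Surjective ((TensorProduct.mk R k N) 1) :=
    TensorProduct.mk_surjective R N k Ideal.Quotient.mk_surjective
  obtain ⟨b, hbsub, hbspan, hbind⟩ :=
    exists_linearIndependent k (Set.range ((TensorProduct.mk R k N) 1))
  have hspan_top : Submodule.span k b = ⊤ := by
    rw [hbspan, Set.range_eq_univ.mpr hsurj1, Submodule.span_univ]
  let bBasis : Module.Basis ↥b k (k ⊗[R] N) := Module.Basis.mk hbind (by
    rw [Subtype.range_coe_subtype, Set.setOf_mem_eq, hspan_top])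
  have hchoice : ∀ v : b, ∃ x : N, (TensorProduct.mk R k N) 1 x = (v : k ⊗[R] N) :=
    fun v => hbsub v.2
  let g : ↥b → N := fun v => (hchoice v).choose
  have hg : ∀ v : b, (1 : k) ⊗ₜ g v = (v : k ⊗[R] N) := fun v => (hchoice v).choose_spec
  have hgen : Submodule.span R (Set.range g) = ⊤ :=
    IsLocalRing.span_eq_top_of_tmul_eq_basis (R := R) g bBasis
      (fun v => by rw [hg v]; simp only [bBasis, Module.Basis.coe_mk])
  haveI : Module.Finite k (k ⊗[R] N) := inferInstance
  haveI : Fintype ↥b := FiniteDimensional.fintypeBasisIndex bBasis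
  have hcard : Fintype.card ↥b = c := by
    rw [← Module.finrank_eq_card_basis bBasis, hdimk]
  let e0 : Fin c ≃ ↥b := (Fintype.equivFinOfCardEq hcard).symm
  let x : Fin c → N := g ∘ e0
  let φ : (Fin c → R) →ₗ[R] N := Fintype.linearCombination R x
  have hφsurj : Function.Surjective φ := by
    rw [← LinearMap.range_eq_top, Fintype.range_linearCombination]
    have hrx : Set.range x = Set.range g := by
      show Set.range (g ∘ e0) = Set.range g
      rw [Set.range_comp, Set.range_eq_univ.mpr e0.surjective, Set.image_univ]
    rw [hrx]
    exact hgen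
  have hφinj : Function.Injective φ :=
    injective_of_fiber_dim φ hφsurj (fun 𝔭 h𝔭 => by
      obtain ⟨K', fK', aK', hker', hdim'⟩ := H 𝔭 h𝔭
      exact ⟨K', fK', aK', le_of_eq hker', hdim'⟩)
  exact ⟨LinearEquiv.ofBijective φ ⟨hφinj, hφsurj⟩⟩

theorem fiber_package {A : Type u} [CommRing A]
    (N : Type v) [AddCommGroup N] [Module A N] {c : ℕ}
    (H : ∀ (𝔭 : Ideal A) (_ : 𝔭.IsPrime),
      Module.finrank (residueFieldAt 𝔭) ((residueFieldAt 𝔭) ⊗[A] N) = c)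
    (𝔪 : Ideal A) [h𝔪 : 𝔪.IsPrime]
    (𝔭' : Ideal (Localization.AtPrime 𝔪)) (h𝔭' : 𝔭'.IsPrime) :
    ∃ (K : Type u) (_ : Field K) (_ : Algebra (Localization.AtPrime 𝔪) K),
      RingHom.ker (algebraMap (Localization.AtPrime 𝔪) K) = 𝔭' ∧
      Module.finrank K (K ⊗[Localization.AtPrime 𝔪] (LocalizedModule 𝔪.primeCompl N)) = c := by
  classical
  set R' := Localization.AtPrime 𝔪 with hR'
  set 𝔭 : Ideal A := 𝔭'.comap (algebraMap A R') with h𝔭def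
  haveI h𝔭 : 𝔭.IsPrime := Ideal.IsPrime.comap _
  have hle : 𝔪.primeCompl ≤ 𝔭.primeCompl := by
    intro x hx
    intro hx𝔭
    -- hx : x ∉ 𝔪 ; hx𝔭 : x ∈ 𝔭
    have h𝔭le𝔪 : algebraMap A R' x ∈ 𝔭' := hx𝔭
    have : IsUnit (algebraMap A R' x) := IsLocalization.map_units R' (⟨x, hx⟩ : 𝔪.primeCompl)
    exact h𝔭'.ne_top (Ideal.eq_top_of_isUnit_mem _ h𝔭le𝔪 this)
  set R𝔭 := Localization.AtPrime 𝔭 with hR𝔭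
  letI : Algebra R' R𝔭 :=
    IsLocalization.localizationAlgebraOfSubmonoidLe R' R𝔭 𝔪.primeCompl 𝔭.primeCompl hle
  haveI : IsScalarTower A R' R𝔭 :=
    IsLocalization.localization_isScalarTower_of_submonoid_le R' R𝔭 𝔪.primeCompl 𝔭.primeCompl hle
  set K := residueFieldAt 𝔭 with hK
  letI : Algebra R' K := ((algebraMap R𝔭 K).comp (algebraMap R' R𝔭)).toAlgebra
  letI : Module R' K := Algebra.toModule
  haveI : IsScalarTower R' R𝔭 K := IsScalarTower.of_algebraMap_eq' rfl
  haveI : IsScalarTower A R' K := IsScalarTower.of_algebraMap_eq' (by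
    rw [RingHom.algebraMap_toAlgebra, RingHom.comp_assoc,
      ← IsScalarTower.algebraMap_eq A R' R𝔭, ← IsScalarTower.algebraMap_eq A R𝔭 K])
  -- kernel computation
  have hkercomp : RingHom.ker (algebraMap R' K) =
      Ideal.comap (algebraMap R' R𝔭) (IsLocalRing.maximalIdeal R𝔭) := by
    ext x
    rw [RingHom.mem_ker, Ideal.mem_comap, RingHom.algebraMap_toAlgebra, RingHom.comp_apply,
      IsLocalRing.ResidueField.algebraMap_eq, IsLocalRing.residue_eq_zero_iff]
  have hcomapA : Ideal.comap (algebraMap A R') (RingHom.ker (algebraMap R' K)) = 𝔭 := by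
    rw [hkercomp, Ideal.comap_comap, ← IsScalarTower.algebraMap_eq A R' R𝔭]
    exact Localization.AtPrime.comap_maximalIdeal
  have hkereq : RingHom.ker (algebraMap R' K) = 𝔭' := by
    have h1 := IsLocalization.map_comap 𝔪.primeCompl R' (RingHom.ker (algebraMap R' K))
    have h2 := IsLocalization.map_comap 𝔪.primeCompl R' 𝔭'
    rw [← h1, ← h2, Ideal.under_def, Ideal.under_def, hcomapA, h𝔭def]
  -- finrank computation
  have bc : IsBaseChange R' (LocalizedModule.mkLinearMap 𝔪.primeCompl N) :=
    (isLocalizedModule_iff_isBaseChange 𝔪.primeCompl R' _).mp inferInstance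
  let e1 : R' ⊗[A] N ≃ₗ[R'] LocalizedModule 𝔪.primeCompl N := bc.equiv
  let e2 : K ⊗[R'] (LocalizedModule 𝔪.primeCompl N) ≃ₗ[K] K ⊗[R'] (R' ⊗[A] N) :=
    TensorProduct.AlgebraTensorModule.congr (LinearEquiv.refl K K) e1.symm
  let e3 : K ⊗[R'] (R' ⊗[A] N) ≃ₗ[K] K ⊗[A] N :=
    TensorProduct.AlgebraTensorModule.cancelBaseChange A R' K K N
  refine ⟨K, inferInstance, inferInstance, hkereq, ?_⟩
  rw [(e2 ≪≫ₗ e3).finrank_eq]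
  exact H 𝔭 h𝔭

theorem const_fiber_projective {A : Type u} [CommRing A] [IsNoetherianRing A] [IsReduced A]
    {N : Type v} [AddCommGroup N] [Module A N] [Module.Finite A N] {c : ℕ}
    (H : ∀ (𝔭 : Ideal A) (_ : 𝔭.IsPrime),
      Module.finrank (residueFieldAt 𝔭) ((residueFieldAt 𝔭) ⊗[A] N) = c) :
    Module.Projective A N ∧
    ∀ (𝔭 : Ideal A) (_ : 𝔭.IsPrime),
      Nonempty ((Fin c → Localization.AtPrime 𝔭) ≃ₗ[Localization.AtPrime 𝔭]
        LocalizedModule 𝔭.primeCompl N) := by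
  have key : ∀ (𝔭 : Ideal A) (_ : 𝔭.IsPrime),
      Nonempty ((Fin c → Localization.AtPrime 𝔭) ≃ₗ[Localization.AtPrime 𝔭]
        LocalizedModule 𝔭.primeCompl N) := by
    intro 𝔭 h𝔭
    set R' := Localization.AtPrime 𝔭
    haveI : IsReduced R' := inferInstance
    have bc : IsBaseChange R' (LocalizedModule.mkLinearMap 𝔭.primeCompl N) :=
      (isLocalizedModule_iff_isBaseChange 𝔭.primeCompl R' _).mp inferInstance
    haveI : Module.Finite R' (LocalizedModule 𝔭.primeCompl N) :=
      Module.Finite.equiv bc.equiv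
    exact exists_equiv_of_local (fun 𝔮 h𝔮 => fiber_package N H 𝔭 𝔮 h𝔮)
  refine ⟨?_, key⟩
  haveI : Module.FinitePresentation A N := Module.finitePresentation_of_finite A N
  apply Module.projective_of_localization_maximal
  intro I hI
  haveI : Module.Free (Localization.AtPrime I) (LocalizedModule I.primeCompl N) :=
    Module.Free.of_equiv (key I hI.isPrime).some
  exact Module.Projective.of_free

/-- localization of an equiv -/
theorem locEquiv {A : Type u} [CommRing A] (S : Submonoid A)
    {X : Type v} {Y : Type w} [AddCommGroup X] [AddCommGroup Y] [Module A X] [Module A Y]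
    (e : X ≃ₗ[A] Y) :
    Nonempty (LocalizedModule S X ≃ₗ[Localization S] LocalizedModule S Y) := by
  have bcX : IsBaseChange (Localization S) (LocalizedModule.mkLinearMap S X) :=
    (isLocalizedModule_iff_isBaseChange S (Localization S) _).mp inferInstance
  have bcY : IsBaseChange (Localization S) (LocalizedModule.mkLinearMap S Y) :=
    (isLocalizedModule_iff_isBaseChange S (Localization S) _).mp inferInstance
  exact ⟨bcX.equiv.symm ≪≫ₗ
    TensorProduct.AlgebraTensorModule.congr
      (LinearEquiv.refl (Localization S) (Localization S)) e ≪≫ₗ bcY.equiv⟩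

/-- localization of a product -/
theorem locProd {A : Type u} [CommRing A] (S : Submonoid A)
    {X : Type v} {Y : Type w} [AddCommGroup X] [AddCommGroup Y] [Module A X] [Module A Y] :
    Nonempty (LocalizedModule S (X × Y) ≃ₗ[Localization S]
      (LocalizedModule S X × LocalizedModule S Y)) := by
  have bcX : IsBaseChange (Localization S) (LocalizedModule.mkLinearMap S X) :=
    (isLocalizedModule_iff_isBaseChange S (Localization S) _).mp inferInstance
  have bcY : IsBaseChange (Localization S) (LocalizedModule.mkLinearMap S Y) :=
    (isLocalizedModule_iff_isBaseChange S (Localization S) _).mp inferInstance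
  have bcXY : IsBaseChange (Localization S) (LocalizedModule.mkLinearMap S (X × Y)) :=
    (isLocalizedModule_iff_isBaseChange S (Localization S) _).mp inferInstance
  exact ⟨bcXY.equiv.symm ≪≫ₗ tensorProdEquiv A (Localization S) X Y ≪≫ₗ
    LinearEquiv.prodCongr bcX.equiv bcY.equiv⟩

/-- the second assertion of Lemma 8.2.1 of the paper.
Let `A` be a reduced Noetherian commutative ring and `C•` a bounded cochain complex of
finite free `A`-modules.  If for every prime `𝔭` of `A` the `κ(𝔭)`-dimension of
`H^i(C• ⊗_A κ(𝔭))` is `h^i` for all `i`, then each `H^i(C•)` is a finitely generated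
projective `A`-module whose localization at every prime `𝔭` is free of rank `h^i` over
`A_𝔭`. -/
theorem cohomology_projective_of_constant_fiber_rank
    {A : Type*} [CommRing A] [IsNoetherianRing A] [IsReduced A]
    (M : ℤ → Type) [∀ i, AddCommGroup (M i)] [∀ i, Module A (M i)]
    [∀ i, Module.Free A (M i)] [∀ i, Module.Finite A (M i)]
    (d : ∀ i : ℤ, M i →ₗ[A] M (i + 1))
    (hdd : ∀ i : ℤ, (d (i + 1)).comp (d i) = 0)
    (hbdd : ∃ a b : ℤ, ∀ i : ℤ, (i < a ∨ b < i) → ∀ x : M i, x = 0)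
    (h : ℤ → ℕ)
    (hfib : ∀ (𝔭 : Ideal A) [𝔭.IsPrime], ∀ i : ℤ,
      Module.rank (residueFieldAt 𝔭)
        (cohQuot ((d i).baseChange (residueFieldAt 𝔭))
          ((d (i + 1)).baseChange (residueFieldAt 𝔭))) = h (i + 1)) :
    ∀ i : ℤ,
      Module.Finite A (cohQuot (d i) (d (i + 1))) ∧
      Module.Projective A (cohQuot (d i) (d (i + 1))) ∧
      ∀ (𝔭 : Ideal A) [𝔭.IsPrime],
        Module.Free (Localization.AtPrime 𝔭)
          (LocalizedModule 𝔭.primeCompl (cohQuot (d i) (d (i + 1)))) ∧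
        Module.rank (Localization.AtPrime 𝔭)
          (LocalizedModule 𝔭.primeCompl (cohQuot (d i) (d (i + 1)))) = h (i + 1) := by
  classical
  intro i
  -- finiteness, valid in all cases
  haveI hNoeth : ∀ j : ℤ, IsNoetherian A (M j) :=
    fun j => isNoetherian_of_isNoetherianRing_of_finite A (M j)
  haveI hFinKer : ∀ j : ℤ, Module.Finite A ↥(LinearMap.ker (d j)) := fun j => inferInstance
  haveI hFinH : Module.Finite A (cohQuot (d i) (d (i + 1))) := inferInstance
  rcases subsingleton_or_nontrivial A with hA | hA
  · -- trivial ring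
    haveI : Subsingleton (cohQuot (d i) (d (i + 1))) := Module.subsingleton A _
    haveI : Module.Free A (cohQuot (d i) (d (i + 1))) :=
      Module.Free.of_basis (Module.Basis.empty (ι := Fin 0) _)
    refine ⟨inferInstance, inferInstance, ?_⟩
    intro 𝔭 h𝔭
    exact absurd (Subsingleton.elim 𝔭 ⊤) h𝔭.ne_top
  obtain ⟨a, b, hab⟩ := hbdd
  haveI : StrongRankCondition A := inferInstance
  -- identity (1): cohomology fiber dimensions
  have hId : ∀ (j : ℤ) (𝔭 : Ideal A) [𝔭.IsPrime],
      h (j + 1)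
        + Module.finrank (residueFieldAt 𝔭)
            ↥(LinearMap.range ((d j).baseChange (residueFieldAt 𝔭)))
        + Module.finrank (residueFieldAt 𝔭)
            ↥(LinearMap.range ((d (j + 1)).baseChange (residueFieldAt 𝔭)))
        = Module.finrank A (M (j + 1)) := by
    intro j 𝔭 h𝔭
    have hgf : ((d (j + 1)).baseChange (residueFieldAt 𝔭)).comp
        ((d j).baseChange (residueFieldAt 𝔭)) = 0 := by
      rw [← LinearMap.baseChange_comp (d j) (d (j + 1)), hdd j]
      ext z
      simp [baseChange_coe]
    have hle : LinearMap.range ((d j).baseChange (residueFieldAt 𝔭))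
        ≤ LinearMap.ker ((d (j + 1)).baseChange (residueFieldAt 𝔭)) :=
      LinearMap.range_le_ker_iff.mpr hgf
    have hcoh : Module.finrank (residueFieldAt 𝔭)
        (cohQuot ((d j).baseChange (residueFieldAt 𝔭))
          ((d (j + 1)).baseChange (residueFieldAt 𝔭))) = h (j + 1) := by
      have hr := hfib 𝔭 j
      rw [Module.finrank, hr, Cardinal.toNat_natCast]
    have hq := Submodule.finrank_quotient_add_finrank (R := residueFieldAt 𝔭)
      (M := ↥(LinearMap.ker ((d (j + 1)).baseChange (residueFieldAt 𝔭))))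
      (Submodule.comap (LinearMap.ker ((d (j + 1)).baseChange (residueFieldAt 𝔭))).subtype
        (LinearMap.range ((d j).baseChange (residueFieldAt 𝔭))))
    have hcomap : Module.finrank (residueFieldAt 𝔭)
        ↥(Submodule.comap (LinearMap.ker ((d (j + 1)).baseChange (residueFieldAt 𝔭))).subtype
          (LinearMap.range ((d j).baseChange (residueFieldAt 𝔭))))
        = Module.finrank (residueFieldAt 𝔭)
          ↥(LinearMap.range ((d j).baseChange (residueFieldAt 𝔭))) :=
      (Submodule.comapSubtypeEquivOfLe hle).finrank_eq
    have hrn := LinearMap.finrank_range_add_finrank_ker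
      ((d (j + 1)).baseChange (residueFieldAt 𝔭))
    have hbase : Module.finrank (residueFieldAt 𝔭) ((residueFieldAt 𝔭) ⊗[A] M (j + 1))
        = Module.finrank A (M (j + 1)) := Module.finrank_baseChange
    rw [hcomap, hcoh] at hq
    omega
  -- identity (2): cokernel fiber dimensions
  have hQ : ∀ (j : ℤ) (𝔭 : Ideal A) [𝔭.IsPrime],
      Module.finrank (residueFieldAt 𝔭)
          ((residueFieldAt 𝔭) ⊗[A] (M (j + 1) ⧸ LinearMap.range (d j)))
        + Module.finrank (residueFieldAt 𝔭)
            ↥(LinearMap.range ((d j).baseChange (residueFieldAt 𝔭)))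
        = Module.finrank A (M (j + 1)) := by
    intro j 𝔭 h𝔭
    have hπsurj : Function.Surjective
        ((LinearMap.range (d j)).mkQ.baseChange (residueFieldAt 𝔭)) := by
      rw [baseChange_coe]
      exact LinearMap.lTensor_surjective _ (Submodule.mkQ_surjective _)
    have hexact : Function.Exact ⇑((d j).baseChange (residueFieldAt 𝔭))
        ⇑((LinearMap.range (d j)).mkQ.baseChange (residueFieldAt 𝔭)) := by
      rw [baseChange_coe, baseChange_coe]
      exact lTensor_exact _ (LinearMap.exact_iff.mpr (Submodule.ker_mkQ _))
        (Submodule.mkQ_surjective _)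
    have hker : LinearMap.ker ((LinearMap.range (d j)).mkQ.baseChange (residueFieldAt 𝔭))
        = LinearMap.range ((d j).baseChange (residueFieldAt 𝔭)) :=
      LinearMap.exact_iff.mp hexact
    have e : (((residueFieldAt 𝔭) ⊗[A] M (j + 1))
          ⧸ LinearMap.range ((d j).baseChange (residueFieldAt 𝔭))) ≃ₗ[residueFieldAt 𝔭]
        (residueFieldAt 𝔭) ⊗[A] (M (j + 1) ⧸ LinearMap.range (d j)) :=
      (Submodule.quotEquivOfEq _ _ hker.symm) ≪≫ₗ
        ((LinearMap.range (d j)).mkQ.baseChange (residueFieldAt 𝔭)).quotKerEquivOfSurjective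
          hπsurj
    have hq := Submodule.finrank_quotient_add_finrank
      (LinearMap.range ((d j).baseChange (residueFieldAt 𝔭)))
    rw [e.finrank_eq] at hq
    rw [Module.finrank_baseChange (M' := M (j + 1))] at hq
    exact hq
  -- ranks of d_j vanish below a
  have hr0 : ∀ (j : ℤ), j < a → ∀ (𝔭 : Ideal A) [𝔭.IsPrime],
      Module.finrank (residueFieldAt 𝔭)
        ↥(LinearMap.range ((d j).baseChange (residueFieldAt 𝔭))) = 0 := by
    intro j hj 𝔭 h𝔭
    haveI : Subsingleton (M j) :=
      ⟨fun x y => by rw [hab j (Or.inl hj) x, hab j (Or.inl hj) y]⟩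
    have hz : ∀ z : (residueFieldAt 𝔭) ⊗[A] M j, z = 0 := by
      intro z
      induction z using TensorProduct.induction_on with
      | zero => rfl
      | tmul a x => rw [Subsingleton.elim x 0, TensorProduct.tmul_zero]
      | add x y hx hy => rw [hx, hy, add_zero]
    have hzero : (d j).baseChange (residueFieldAt 𝔭) = 0 := by
      apply LinearMap.ext
      intro z
      rw [hz z, map_zero, map_zero]
    rw [hzero, LinearMap.range_zero, finrank_bot]
  -- constancy of the ranks of d_j
  have hrconst : ∀ (j : ℤ) (𝔭 : Ideal A) [𝔭.IsPrime] (𝔮 : Ideal A) [𝔮.IsPrime],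
      Module.finrank (residueFieldAt 𝔭)
          ↥(LinearMap.range ((d j).baseChange (residueFieldAt 𝔭)))
        = Module.finrank (residueFieldAt 𝔮)
          ↥(LinearMap.range ((d j).baseChange (residueFieldAt 𝔮))) := by
    have main : ∀ (j : ℤ), a - 1 ≤ j → ∀ (𝔭 : Ideal A) [𝔭.IsPrime] (𝔮 : Ideal A) [𝔮.IsPrime],
        Module.finrank (residueFieldAt 𝔭)
            ↥(LinearMap.range ((d j).baseChange (residueFieldAt 𝔭)))
          = Module.finrank (residueFieldAt 𝔮)
            ↥(LinearMap.range ((d j).baseChange (residueFieldAt 𝔮))) := by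
      refine Int.le_induction ?_ ?_
      · intro 𝔭 h𝔭 𝔮 h𝔮
        rw [hr0 (a - 1) (by omega) 𝔭, hr0 (a - 1) (by omega) 𝔮]
      · intro n hn ih 𝔭 h𝔭 𝔮 h𝔮
        have e1 := hId n 𝔭
        have e2 := hId n 𝔮
        have e3 := ih 𝔭 𝔮
        omega
    intro j 𝔭 h𝔭 𝔮 h𝔮
    rcases lt_or_ge j a with hj | hj
    · rw [hr0 j hj 𝔭, hr0 j hj 𝔮]
    · exact main j (by omega) 𝔭 𝔮
  -- base prime
  obtain ⟨𝔪₀, h𝔪₀⟩ := Ideal.exists_maximal A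
  haveI h𝔪₀p : 𝔪₀.IsPrime := h𝔪₀.isPrime
  -- constancy of cokernel fiber dimensions
  have hQconst : ∀ (j : ℤ) (𝔭 : Ideal A) [𝔭.IsPrime],
      Module.finrank (residueFieldAt 𝔭)
          ((residueFieldAt 𝔭) ⊗[A] (M (j + 1) ⧸ LinearMap.range (d j)))
        = Module.finrank (residueFieldAt 𝔪₀)
          ((residueFieldAt 𝔪₀) ⊗[A] (M (j + 1) ⧸ LinearMap.range (d j))) := by
    intro j 𝔭 h𝔭
    have e1 := hQ j 𝔭
    have e2 := hQ j 𝔪₀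
    have e3 := hrconst j 𝔭 𝔪₀
    omega
  -- projectivity of the cokernels
  haveI hFinQ : ∀ j : ℤ, Module.Finite A (M (j + 1) ⧸ LinearMap.range (d j)) :=
    fun j => inferInstance
  obtain ⟨hPQi, hLQi⟩ := const_fiber_projective
    (N := M (i + 1) ⧸ LinearMap.range (d i))
    (c := Module.finrank (residueFieldAt 𝔪₀)
      ((residueFieldAt 𝔪₀) ⊗[A] (M (i + 1) ⧸ LinearMap.range (d i))))
    (fun 𝔭 h𝔭 => hQconst i 𝔭)
  obtain ⟨hPQi1, hLQi1⟩ := const_fiber_projective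
    (N := M (i + 1 + 1) ⧸ LinearMap.range (d (i + 1)))
    (c := Module.finrank (residueFieldAt 𝔪₀)
      ((residueFieldAt 𝔪₀) ⊗[A] (M (i + 1 + 1) ⧸ LinearMap.range (d (i + 1)))))
    (fun 𝔭 h𝔭 => hQconst (i + 1) 𝔭)
  -- splitting of M (i+1+1) along the cokernel of d (i+1)
  obtain ⟨E1⟩ := splitHelper ((LinearMap.range (d (i + 1))).mkQ)
    (Submodule.mkQ_surjective _) hPQi1
  haveI hPfree : ∀ j : ℤ, Module.Projective A (M j) := fun j => Module.Projective.of_free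
  have hPkermkQ : Module.Projective A ↥(LinearMap.ker ((LinearMap.range (d (i + 1))).mkQ)) :=
    Module.Projective.of_split (E1.symm.toLinearMap.comp (LinearMap.inl A _ _))
      ((LinearMap.fst A _ _).comp E1.toLinearMap) (by ext z; simp)
  have hPrange : Module.Projective A ↥(LinearMap.range (d (i + 1))) :=
    Module.Projective.of_equiv
      (LinearEquiv.ofEq _ _ (Submodule.ker_mkQ (LinearMap.range (d (i + 1)))))
  -- the induced map on the cokernel of d i
  have hle2 : LinearMap.range (d i) ≤ LinearMap.ker (d (i + 1)) :=
    LinearMap.range_le_ker_iff.mpr (hdd i)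
  set dbar := Submodule.liftQ (LinearMap.range (d i)) (d (i + 1)) hle2 with hdbar
  have hrange_eq : LinearMap.range dbar = LinearMap.range (d (i + 1)) :=
    Submodule.range_liftQ _ _ _
  have hPranged : Module.Projective A ↥(LinearMap.range dbar) :=
    Module.Projective.of_equiv (LinearEquiv.ofEq _ _ hrange_eq.symm)
  obtain ⟨G⟩ := splitHelper dbar.rangeRestrict (LinearMap.surjective_rangeRestrict dbar) hPranged
  -- the cohomology is the kernel of dbar
  have hΦmem : ∀ x : ↥(LinearMap.ker (d (i + 1))),
      (LinearMap.range (d i)).mkQ x.1 ∈ LinearMap.ker dbar := by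
    rintro ⟨x, hx⟩
    simp only [LinearMap.mem_ker] at hx ⊢
    rw [hdbar]
    erw [Submodule.liftQ_apply]
    exact hx
  set Φ : ↥(LinearMap.ker (d (i + 1))) →ₗ[A] ↥(LinearMap.ker dbar) :=
    LinearMap.codRestrict (LinearMap.ker dbar)
      (((LinearMap.range (d i)).mkQ).comp (LinearMap.ker (d (i + 1))).subtype) hΦmem with hΦ
  have hΦsurj : Function.Surjective Φ := by
    rintro ⟨q, hq⟩
    obtain ⟨y, rfl⟩ := Submodule.mkQ_surjective _ q
    have hy : y ∈ LinearMap.ker (d (i + 1)) := by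
      rw [LinearMap.mem_ker] at hq ⊢
      rw [hdbar] at hq
      erw [Submodule.liftQ_apply] at hq
      exact hq
    exact ⟨⟨y, hy⟩, Subtype.ext rfl⟩
  have hΦker : LinearMap.ker Φ
      = Submodule.comap (LinearMap.ker (d (i + 1))).subtype (LinearMap.range (d i)) := by
    ext ⟨x, hx⟩
    simp only [LinearMap.mem_ker, Submodule.mem_comap, Submodule.subtype_apply]
    constructor
    · intro hz
      have h0 : (LinearMap.range (d i)).mkQ x = 0 := congrArg Subtype.val hz
      rwa [Submodule.mkQ_apply, Submodule.Quotient.mk_eq_zero] at h0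
    · intro hz
      refine Subtype.ext ?_
      show ((LinearMap.range (d i)).mkQ.comp (LinearMap.ker (d (i + 1))).subtype) ⟨x, hx⟩ = 0
      rw [LinearMap.comp_apply, Submodule.subtype_apply, Submodule.mkQ_apply,
        Submodule.Quotient.mk_eq_zero]
      exact hz
  have eH : cohQuot (d i) (d (i + 1)) ≃ₗ[A] ↥(LinearMap.ker dbar) :=
    (Submodule.quotEquivOfEq _ _ hΦker.symm) ≪≫ₗ Φ.quotKerEquivOfSurjective hΦsurj
  -- projectivity of the cohomology
  have hPkrr : Module.Projective A ↥(LinearMap.ker dbar.rangeRestrict) :=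
    Module.Projective.of_split (G.symm.toLinearMap.comp (LinearMap.inl A _ _))
      ((LinearMap.fst A _ _).comp G.toLinearMap) (by ext z; simp)
  have hPkerd : Module.Projective A ↥(LinearMap.ker dbar) :=
    Module.Projective.of_equiv (LinearEquiv.ofEq _ _ (LinearMap.ker_rangeRestrict dbar))
  have hPH : Module.Projective A (cohQuot (d i) (d (i + 1))) :=
    Module.Projective.of_equiv eH.symm
  refine ⟨hFinH, hPH, ?_⟩
  -- rank statements
  intro 𝔭 h𝔭
  haveI : Module.FinitePresentation A (cohQuot (d i) (d (i + 1))) :=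
    Module.finitePresentation_of_finite A _
  haveI := hPH
  haveI hfree : Module.Free (Localization.AtPrime 𝔭)
      (LocalizedModule 𝔭.primeCompl (cohQuot (d i) (d (i + 1)))) :=
    Module.free_of_flat_of_isLocalRing
  refine ⟨hfree, ?_⟩
  -- set up instances for the localized pieces
  haveI : Module.Finite (Localization.AtPrime 𝔭)
      (LocalizedModule 𝔭.primeCompl (cohQuot (d i) (d (i + 1)))) := inferInstance
  haveI hNQ0 : IsNoetherian A (M (i + 1) ⧸ LinearMap.range (d i)) :=
    isNoetherian_of_isNoetherianRing_of_finite A _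
  haveI hF1 : Module.Finite A ↥(LinearMap.ker ((LinearMap.range (d (i + 1))).mkQ)) :=
    inferInstance
  haveI hF2 : Module.Finite A ↥(LinearMap.ker dbar.rangeRestrict) := inferInstance
  haveI hF3 : Module.Finite A ↥(LinearMap.range dbar) := inferInstance
  haveI hF4 : Module.Finite A ↥(LinearMap.ker dbar) := inferInstance
  -- finite presentation instances
  haveI := Module.finitePresentation_of_finite A
    ↥(LinearMap.ker ((LinearMap.range (d (i + 1))).mkQ))
  haveI := Module.finitePresentation_of_finite A (M (i + 1 + 1) ⧸ LinearMap.range (d (i + 1)))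
  haveI := Module.finitePresentation_of_finite A (M (i + 1) ⧸ LinearMap.range (d i))
  haveI := Module.finitePresentation_of_finite A ↥(LinearMap.ker dbar.rangeRestrict)
  haveI := Module.finitePresentation_of_finite A ↥(LinearMap.range dbar)
  haveI := Module.finitePresentation_of_finite A ↥(LinearMap.ker dbar)
  -- projectivity instances
  haveI := hPkermkQ
  haveI := hPQi
  haveI := hPQi1
  haveI := hPkrr
  haveI := hPranged
  haveI := hPkerd
  -- freeness of localizations of the pieces
  haveI : Module.Free (Localization.AtPrime 𝔭)
      (LocalizedModule 𝔭.primeCompl ↥(LinearMap.ker ((LinearMap.range (d (i + 1))).mkQ))) :=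
    Module.free_of_flat_of_isLocalRing
  haveI : Module.Free (Localization.AtPrime 𝔭)
      (LocalizedModule 𝔭.primeCompl (M (i + 1 + 1) ⧸ LinearMap.range (d (i + 1)))) :=
    Module.free_of_flat_of_isLocalRing
  haveI : Module.Free (Localization.AtPrime 𝔭)
      (LocalizedModule 𝔭.primeCompl (M (i + 1) ⧸ LinearMap.range (d i))) :=
    Module.free_of_flat_of_isLocalRing
  haveI : Module.Free (Localization.AtPrime 𝔭)
      (LocalizedModule 𝔭.primeCompl ↥(LinearMap.ker dbar.rangeRestrict)) :=
    Module.free_of_flat_of_isLocalRing (R := Localization.AtPrime 𝔭)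
      (P := LocalizedModule 𝔭.primeCompl ↥(LinearMap.ker dbar.rangeRestrict))
  haveI : Module.Free (Localization.AtPrime 𝔭)
      (LocalizedModule 𝔭.primeCompl ↥(LinearMap.range dbar)) :=
    Module.free_of_flat_of_isLocalRing
  haveI : Module.Finite (Localization.AtPrime 𝔭)
      (LocalizedModule 𝔭.primeCompl ↥(LinearMap.ker ((LinearMap.range (d (i + 1))).mkQ))) :=
    inferInstance
  haveI : Module.Finite (Localization.AtPrime 𝔭)
      (LocalizedModule 𝔭.primeCompl (M (i + 1 + 1) ⧸ LinearMap.range (d (i + 1)))) :=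
    inferInstance
  haveI : Module.Finite (Localization.AtPrime 𝔭)
      (LocalizedModule 𝔭.primeCompl (M (i + 1) ⧸ LinearMap.range (d i))) := inferInstance
  haveI : Module.Finite (Localization.AtPrime 𝔭)
      (LocalizedModule 𝔭.primeCompl ↥(LinearMap.ker dbar.rangeRestrict)) := inferInstance
  haveI : Module.Finite (Localization.AtPrime 𝔭)
      (LocalizedModule 𝔭.primeCompl ↥(LinearMap.range dbar)) := inferInstance
  -- rank computations
  have hn2 : Module.finrank (Localization.AtPrime 𝔭)
      (LocalizedModule 𝔭.primeCompl (M (i + 1 + 1))) = Module.finrank A (M (i + 1 + 1)) :=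
    Module.finrank_of_isLocalizedModule_of_free (Localization.AtPrime 𝔭) 𝔭.primeCompl
      (LocalizedModule.mkLinearMap 𝔭.primeCompl (M (i + 1 + 1)))
  have hsum1 : Module.finrank (Localization.AtPrime 𝔭)
      (LocalizedModule 𝔭.primeCompl (M (i + 1 + 1)))
      = Module.finrank (Localization.AtPrime 𝔭)
          (LocalizedModule 𝔭.primeCompl ↥(LinearMap.ker ((LinearMap.range (d (i + 1))).mkQ)))
        + Module.finrank (Localization.AtPrime 𝔭)
          (LocalizedModule 𝔭.primeCompl (M (i + 1 + 1) ⧸ LinearMap.range (d (i + 1)))) := by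
    rw [((locEquiv 𝔭.primeCompl E1).some ≪≫ₗ (locProd 𝔭.primeCompl).some).finrank_eq]
    exact Module.finrank_prod
  have hQ1val : Module.finrank (Localization.AtPrime 𝔭)
      (LocalizedModule 𝔭.primeCompl (M (i + 1 + 1) ⧸ LinearMap.range (d (i + 1))))
      = Module.finrank (residueFieldAt 𝔪₀)
        ((residueFieldAt 𝔪₀) ⊗[A] (M (i + 1 + 1) ⧸ LinearMap.range (d (i + 1)))) := by
    rw [← (hLQi1 𝔭 h𝔭).some.finrank_eq, Module.finrank_pi, Fintype.card_fin]
  have hQ0val : Module.finrank (Localization.AtPrime 𝔭)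
      (LocalizedModule 𝔭.primeCompl (M (i + 1) ⧸ LinearMap.range (d i)))
      = Module.finrank (residueFieldAt 𝔪₀)
        ((residueFieldAt 𝔪₀) ⊗[A] (M (i + 1) ⧸ LinearMap.range (d i))) := by
    rw [← (hLQi 𝔭 h𝔭).some.finrank_eq, Module.finrank_pi, Fintype.card_fin]
  have hX1 : Module.finrank (Localization.AtPrime 𝔭)
      (LocalizedModule 𝔭.primeCompl ↥(LinearMap.ker ((LinearMap.range (d (i + 1))).mkQ)))
      = Module.finrank (Localization.AtPrime 𝔭)
        (LocalizedModule 𝔭.primeCompl ↥(LinearMap.range dbar)) := by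
    refine ((locEquiv 𝔭.primeCompl ?_).some).finrank_eq
    exact (LinearEquiv.ofEq _ _ (Submodule.ker_mkQ (LinearMap.range (d (i + 1))))) ≪≫ₗ
      (LinearEquiv.ofEq _ _ hrange_eq.symm)
  have hsum2 : Module.finrank (Localization.AtPrime 𝔭)
      (LocalizedModule 𝔭.primeCompl (M (i + 1) ⧸ LinearMap.range (d i)))
      = Module.finrank (Localization.AtPrime 𝔭)
          (LocalizedModule 𝔭.primeCompl ↥(LinearMap.ker dbar.rangeRestrict))
        + Module.finrank (Localization.AtPrime 𝔭)
          (LocalizedModule 𝔭.primeCompl ↥(LinearMap.range dbar)) := by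
    rw [((locEquiv 𝔭.primeCompl G).some ≪≫ₗ (locProd 𝔭.primeCompl).some).finrank_eq]
    exact Module.finrank_prod
  have hX2 : Module.finrank (Localization.AtPrime 𝔭)
      (LocalizedModule 𝔭.primeCompl ↥(LinearMap.ker dbar.rangeRestrict))
      = Module.finrank (Localization.AtPrime 𝔭)
        (LocalizedModule 𝔭.primeCompl (cohQuot (d i) (d (i + 1)))) := by
    refine ((locEquiv 𝔭.primeCompl ?_).some).finrank_eq
    exact (LinearEquiv.ofEq _ _ (LinearMap.ker_rangeRestrict dbar)) ≪≫ₗ eH.symm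
  have hfib1 := hQ (i + 1) 𝔭
  have hfibc1 := hQconst (i + 1) 𝔭
  have hfib0 := hQ i 𝔭
  have hfibc0 := hQconst i 𝔭
  have hid0 := hId i 𝔭
  rw [← Module.finrank_eq_rank]
  norm_cast
  omega
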